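/- Let R be a commutative ℚ-algebra and h, a ∈ R such that r ∈ R satisfies r^2 = (h−1)^2 + 4a. For m ≥ 0, let A_m be the (m+1)×(m+1) tridiagonal matrix with diagonal entries 0, −(h−1), −2(h−1), …, −m(h−1), superdiagonal entries m a, (m−1)a, …, a, and subdiagonal entries 1, 2, …, m. Then det A_m = Π_{k=0}^{m} ( −m(h−1)/2 + ((m−2k)/2) r ). -/

import Mathlib

open Polynomial Matrix

namespace Stmt10Aux

variable {T : Type*} [CommRing T]

theorem dlin (x : T) (a : ℕ) :
    (1 + C x * X) * derivative ((1 + C x * X)^a) = C ((a:T)*x) * (1 + C x * X)^a := by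
  induction a with
  | zero => simp
  | succ n ih =>
    rw [pow_succ, derivative_mul]
    push_cast
    rw [mul_add]
    calc (1 + C x * X) * (derivative ((1 + C x * X) ^ n) * (1 + C x * X))
          + (1 + C x * X) * ((1 + C x * X) ^ n * derivative (1 + C x * X))
        = ((1 + C x * X) * derivative ((1 + C x * X) ^ n)) * (1 + C x * X)
          + (1 + C x * X) * ((1 + C x * X) ^ n * C x) := by
          simp [derivative_add, derivative_one, derivative_C_mul, derivative_X]; ring
      _ = (C ((n:T)*x) + C x) * (1 + C x * X)^(n+1) := by rw [ih]; ring
      _ = C (((n:T)+1)*x) * (1 + C x * X)^(n+1) := by rw [← C_add]; ring_nf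

noncomputable def Q (x y : T) (a b : ℕ) : T[X] := (1 + C x * X)^a * (1 + C y * X)^b

theorem key (x y : T) (a b : ℕ) :
    derivative (Q x y a b) + C (x+y) * (X * derivative (Q x y a b))
      + C (x*y) * (X * (X * derivative (Q x y a b)))
    = C (((a+b:ℕ):T)*(x*y)) * (X * Q x y a b) + C ((a:T)*x + (b:T)*y) * Q x y a b := by
  have h : (1 + C x * X) * (1 + C y * X) * derivative (Q x y a b)
      = (C ((a:T)*x) * (1 + C y * X) + C ((b:T)*y) * (1 + C x * X)) * Q x y a b := by
    unfold Q
    rw [derivative_mul]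
    calc (1 + C x * X) * (1 + C y * X) *
          (derivative ((1 + C x * X)^a) * (1 + C y * X)^b
            + (1 + C x * X)^a * derivative ((1 + C y * X)^b))
        = ((1 + C x * X) * derivative ((1 + C x * X)^a)) * ((1 + C y * X) * (1 + C y * X)^b)
          + ((1 + C y * X) * derivative ((1 + C y * X)^b)) * ((1 + C x * X) * (1 + C x * X)^a) := by
          ring
      _ = _ := by rw [dlin x a, dlin y b]; ring
  have h2 : (1 + C x * X) * (1 + C y * X) * derivative (Q x y a b)
      = derivative (Q x y a b) + C (x+y) * (X * derivative (Q x y a b))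
        + C (x*y) * (X * (X * derivative (Q x y a b))) := by
    simp only [C_add, C_mul]; ring
  rw [← h2, h]
  simp only [Nat.cast_add, C_add, C_mul]
  ring

theorem row0 (x y : T) (a b : ℕ) :
    (Q x y a b).coeff 1 = ((a:T)*x + (b:T)*y) * (Q x y a b).coeff 0 := by
  have := congrArg (fun p => Polynomial.coeff p 0) (key x y a b)
  simpa [coeff_derivative, mul_comm] using this

theorem rowS (x y : T) (a b : ℕ) (t : ℕ) :
    ((t:T)+2) * (Q x y a b).coeff (t+2) + ((t:T)+1) * (x+y) * (Q x y a b).coeff (t+1)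
      + (t:T) * (x*y) * (Q x y a b).coeff t
    = ((a+b:ℕ):T) * (x*y) * (Q x y a b).coeff t
      + ((a:T)*x + (b:T)*y) * (Q x y a b).coeff (t+1) := by
  cases t with
  | zero =>
    have := congrArg (fun p => Polynomial.coeff p 1) (key x y a b)
    have h0 : ∀ p : T[X], (X * p).coeff 0 = 0 := by
      intro p; rw [mul_coeff_zero]; simp
    rw [show ((1:ℕ)) = 0 + 1 from rfl] at this
    simp only [coeff_add, coeff_C_mul, coeff_X_mul, coeff_derivative, h0,
      zero_mul, mul_zero] at this
    push_cast at this ⊢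
    linear_combination this
  | succ s =>
    have := congrArg (fun p => Polynomial.coeff p (s+2)) (key x y a b)
    simp only [coeff_add, coeff_C_mul, coeff_X_mul, coeff_derivative] at this
    push_cast at this ⊢
    linear_combination this

theorem degQ (x y : T) (a b n : ℕ) (hn : a + b < n) : (Q x y a b).coeff n = 0 := by
  apply coeff_eq_zero_of_natDegree_lt
  apply lt_of_le_of_lt _ hn
  have hlin : ∀ z : T, (1 + C z * X).natDegree ≤ 1 := by
    intro z
    refine le_trans (natDegree_add_le _ _) (max_le ?_ ?_)
    · exact le_trans natDegree_one.le (by norm_num)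
    · exact le_trans (natDegree_C_mul_le _ _) natDegree_X_le
  refine le_trans natDegree_mul_le (add_le_add ?_ ?_) <;>
  · refine le_trans natDegree_pow_le ?_
    nlinarith [hlin x, hlin y]

/-- The eigenvector matrix. -/
noncomputable def Pmat (x y : T) (m : ℕ) : Matrix (Fin (m+1)) (Fin (m+1)) T :=
  fun i k => (Q x y (m - (k:ℕ)) (k:ℕ)).coeff (i:ℕ)

/-- The eigenvalues. -/
def lamF (x y : T) (m : ℕ) : Fin (m+1) → T :=
  fun k => ((m - (k:ℕ) : ℕ):T) * x + ((k:ℕ):T) * y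

theorem matRel (x y : T) (m : ℕ) (B : Matrix (Fin (m+1)) (Fin (m+1)) T)
    (hB : ∀ i j : Fin (m+1), B i j =
      if (i : ℕ) = (j : ℕ) then (((i:ℕ)):T) * (x + y)
      else if (i : ℕ) + 1 = (j : ℕ) then -(((m:T) - ((i:ℕ):T)) * (x*y))
      else if (j : ℕ) + 1 = (i : ℕ) then (((j:ℕ):T) + 1)
      else 0) :
    (Pmat x y m)ᵀ * B = Matrix.diagonal (lamF x y m) * (Pmat x y m)ᵀ := by
  ext k j
  rw [Matrix.mul_apply, Matrix.diagonal_mul]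
  simp only [Matrix.transpose_apply]
  set a := m - (k:ℕ) with ha
  set b := (k:ℕ) with hb
  have hab : a + b = m := Nat.sub_add_cancel (Nat.lt_succ_iff.mp k.isLt)
  set c : ℕ → T := fun n => (Q x y a b).coeff n with hc
  set jn := (j:ℕ) with hjn
  have hjm : jn ≤ m := Nat.lt_succ_iff.mp j.isLt
  set G : ℕ → T := fun n =>
    c n * (if n = jn then ((n:T)) * (x + y)
      else if n + 1 = jn then -(((m:T) - (n:T)) * (x*y))
      else if jn + 1 = n then ((jn:T) + 1)
      else 0) with hG
  have hsum : ∑ i : Fin (m+1), Pmat x y m i k * B i j = ∑ n ∈ Finset.range (m+1), G n := by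
    rw [← Fin.sum_univ_eq_sum_range]
    refine Finset.sum_congr rfl fun i _ => ?_
    rw [hB i j, hG]
    rfl
  rw [hsum]
  have hGzero : ∀ n, m < n → G n = 0 := by
    intro n hn
    have : c n = 0 := degQ x y a b n (by omega)
    simp [hG, this]
  have hext : ∑ n ∈ Finset.range (m+1), G n = ∑ n ∈ Finset.range (m+3), G n := by
    refine Finset.sum_subset (Finset.range_subset_range.mpr (by omega)) ?_
    intro n _ hn
    exact hGzero n (by simp at hn ⊢; omega)
  rw [hext]
  -- target : ∑ n in range (m+3), G n = lamF x y m k * c jn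
  have hlam : lamF x y m k = (a:T) * x + (b:T) * y := rfl
  rcases Nat.eq_zero_or_eq_succ_pred jn with hj0 | hjs
  · -- jn = 0
    have hs : ∑ n ∈ Finset.range (m+3), G n = ∑ n ∈ ({0, 1} : Finset ℕ), G n := by
      refine (Finset.sum_subset ?_ ?_).symm
      · intro n hn
        simp only [Finset.mem_insert, Finset.mem_singleton] at hn
        simp only [Finset.mem_range]; omega
      · intro n _ hn
        simp only [Finset.mem_insert, Finset.mem_singleton] at hn
        push_neg at hn
        simp only [hG, hj0]
        rw [if_neg (by omega), if_neg (by omega), if_neg (by omega)]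
        ring
    rw [hs, Finset.sum_pair (by omega)]
    have hPjk : Pmat x y m j k = c jn := rfl
    rw [hPjk, hj0, hlam]
    simp only [hG, hj0]
    norm_num
    have := row0 x y a b
    linear_combination this
  · -- jn = t + 1
    set t := jn - 1 with ht
    have hjt : jn = t + 1 := hjs
    have hs : ∑ n ∈ Finset.range (m+3), G n = ∑ n ∈ ({t, t+1, t+2} : Finset ℕ), G n := by
      refine (Finset.sum_subset ?_ ?_).symm
      · intro n hn
        simp only [Finset.mem_insert, Finset.mem_singleton] at hn
        simp only [Finset.mem_range]; omega
      · intro n _ hn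
        simp only [Finset.mem_insert, Finset.mem_singleton] at hn
        push_neg at hn
        simp only [hG, hjt]
        rw [if_neg (by omega), if_neg (by omega), if_neg (by omega)]
        ring
    rw [hs]
    rw [show ({t, t+1, t+2} : Finset ℕ) = insert t {t+1, t+2} from rfl]
    rw [Finset.sum_insert (by intro hmem; simp only [Finset.mem_insert, Finset.mem_singleton] at hmem; omega), Finset.sum_pair (by omega)]
    have hPjk : Pmat x y m j k = c jn := rfl
    rw [hPjk, hjt, hlam]
    simp only [hG, hjt]
    norm_num
    have hrs := rowS x y a b t
    rw [hab] at hrs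
    linear_combination hrs


open MvPolynomial in
theorem detP_ne (m : ℕ) :
    (Pmat (X 0 : MvPolynomial (Fin 2) ℚ) (X 1) m).det ≠ 0 := by
  intro h0
  set x : MvPolynomial (Fin 2) ℚ := X 0
  set y : MvPolynomial (Fin 2) ℚ := X 1
  let ψ : MvPolynomial (Fin 2) ℚ →+* ℚ := (aeval ![1, 0] : MvPolynomial (Fin 2) ℚ →ₐ[ℚ] ℚ).toRingHom
  have hψx : ψ x = 1 := by simp [ψ, x]
  have hψy : ψ y = 0 := by simp [ψ, y]
  have hmap : (Pmat x y m).map ψ = Matrix.of (fun i k : Fin (m+1) => ((m - (k:ℕ)).choose (i:ℕ) : ℚ)) := by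
    ext i k
    rw [Matrix.map_apply]
    show ψ ((Q x y (m - (k:ℕ)) (k:ℕ)).coeff (i:ℕ)) = _
    rw [← Polynomial.coeff_map]
    unfold Q
    rw [Polynomial.map_mul, Polynomial.map_pow, Polynomial.map_pow, Polynomial.map_add,
      Polynomial.map_add, Polynomial.map_one, Polynomial.map_mul, Polynomial.map_mul,
      Polynomial.map_C, Polynomial.map_C, Polynomial.map_X, hψx, hψy]
    simp [coeff_one_add_X_pow]
  have hdet0 : ((Pmat x y m).map ψ).det = 0 := by
    rw [show (Pmat x y m).map ⇑ψ = ψ.mapMatrix (Pmat x y m) from rfl, ← RingHom.map_det, h0,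
      map_zero]
  have htri : (((Pmat x y m).map ψ).submatrix Fin.revPerm id).det = 1 := by
    rw [Matrix.det_of_lowerTriangular _ ?_]
    · rw [hmap]
      refine Finset.prod_eq_one fun i _ => ?_
      have hrev : ((Fin.revPerm i : Fin (m+1)) : ℕ) = m - (i : ℕ) := by
        simp [Fin.revPerm_apply, Fin.val_rev]
      simp only [Matrix.submatrix_apply, Matrix.of_apply, id_eq, hrev, Nat.choose_self, Nat.cast_one]
    · intro i j hij
      rw [hmap]
      simp only [Matrix.submatrix_apply, Matrix.of_apply, id_eq, Nat.cast_eq_zero]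
      have hrev : ((Fin.revPerm i : Fin (m+1)) : ℕ) = m - (i : ℕ) := by
        simp [Fin.revPerm_apply, Fin.val_rev]
      rw [hrev]
      apply Nat.choose_eq_zero_of_lt
      have hi : (i:ℕ) ≤ m := Nat.lt_succ_iff.mp i.isLt
      have hj : (j:ℕ) ≤ m := Nat.lt_succ_iff.mp j.isLt
      have hlt : (i:ℕ) < (j:ℕ) := hij
      omega
  rw [Matrix.det_permute, hdet0, mul_zero] at htri
  exact zero_ne_one htri

open MvPolynomial in
theorem univDet (m : ℕ) (B : Matrix (Fin (m+1)) (Fin (m+1)) (MvPolynomial (Fin 2) ℚ))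
    (hB : ∀ i j : Fin (m+1), B i j =
      if (i : ℕ) = (j : ℕ) then (((i:ℕ)) : MvPolynomial (Fin 2) ℚ) * (X 0 + X 1)
      else if (i : ℕ) + 1 = (j : ℕ) then
        -((((m:ℕ) : MvPolynomial (Fin 2) ℚ) - ((i:ℕ) : MvPolynomial (Fin 2) ℚ)) * (X 0 * X 1))
      else if (j : ℕ) + 1 = (i : ℕ) then (((j:ℕ) : MvPolynomial (Fin 2) ℚ) + 1)
      else 0) :
    B.det = ∏ k ∈ Finset.range (m+1),
      (((m - k : ℕ) : MvPolynomial (Fin 2) ℚ) * X 0 + ((k : ℕ) : MvPolynomial (Fin 2) ℚ) * X 1) := by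
  have hrel := matRel (X 0 : MvPolynomial (Fin 2) ℚ) (X 1) m B hB
  have hdet := congrArg Matrix.det hrel
  rw [Matrix.det_mul, Matrix.det_mul, Matrix.det_transpose, Matrix.det_diagonal] at hdet
  have hcancel : B.det * (Pmat (X 0 : MvPolynomial (Fin 2) ℚ) (X 1) m).det
      = (∏ k : Fin (m+1), lamF (X 0 : MvPolynomial (Fin 2) ℚ) (X 1) m k)
        * (Pmat (X 0 : MvPolynomial (Fin 2) ℚ) (X 1) m).det := by
    rw [mul_comm] at hdet; rw [hdet]
  have := mul_right_cancel₀ (detP_ne m) hcancel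
  rw [this, ← Fin.prod_univ_eq_prod_range]
  rfl


end Stmt10Aux

/-- Let R be a commutative ℚ-algebra and h, a, r ∈ R with r² = (h−1)² + 4a. Let A_m be
the (m+1)×(m+1) tridiagonal matrix with diagonal entries 0, −(h−1), …, −m(h−1),
superdiagonal entries m·a, (m−1)·a, …, a, and subdiagonal entries 1, 2, …, m. Then
det A_m = Π_{k=0}^m ( −m(h−1)/2 + ((m−2k)/2)·r ). -/
theorem stmt10 {R : Type*} [CommRing R] [Algebra ℚ R] (h a r : R)
    (hr : r ^ 2 = (h - 1) ^ 2 + 4 * a) (m : ℕ)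
    (A : Matrix (Fin (m+1)) (Fin (m+1)) R)
    (hA : ∀ i j : Fin (m+1),
      A i j =
        if (i : ℕ) = (j : ℕ) then -(((i : ℕ) : R) * (h - 1))
        else if (i : ℕ) + 1 = (j : ℕ) then ((m : R) - (i : ℕ)) * a
        else if (j : ℕ) + 1 = (i : ℕ) then (((j : ℕ) : R) + 1)
        else 0) :
    A.det = ∏ k ∈ Finset.range (m+1),
      (-(((m : ℚ) / 2) • ((h - 1))) + (((m : ℚ) - 2 * (k : ℚ)) / 2) • r) := by
  classical
  set q2 : R := algebraMap ℚ R (2⁻¹) with hq2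
  have hu : (2 : R) * q2 = 1 := by
    rw [hq2, show ((2:R)) = algebraMap ℚ R 2 from by rw [map_ofNat], ← _root_.map_mul]
    norm_num
  set α : R := q2 * (r - (h - 1)) with hα
  set β : R := -(q2 * (r + (h - 1))) with hβ
  have hsum : α + β = -(h - 1) := by
    rw [hα, hβ]; linear_combination (-(h-1)) * hu
  have hprod : α * β = -a := by
    rw [hα, hβ]
    linear_combination (-(q2^2)) * hr - a * (1 + 2*q2) * hu
  let φ : MvPolynomial (Fin 2) ℚ →ₐ[ℚ] R := MvPolynomial.aeval ![α, β]
  have hφx : φ (MvPolynomial.X 0) = α := by simp [φ]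
  have hφy : φ (MvPolynomial.X 1) = β := by simp [φ]
  set B : Matrix (Fin (m+1)) (Fin (m+1)) (MvPolynomial (Fin 2) ℚ) := fun i j =>
      if (i : ℕ) = (j : ℕ) then (((i:ℕ)) : MvPolynomial (Fin 2) ℚ) * (MvPolynomial.X 0 + MvPolynomial.X 1)
      else if (i : ℕ) + 1 = (j : ℕ) then
        -((((m:ℕ) : MvPolynomial (Fin 2) ℚ) - ((i:ℕ) : MvPolynomial (Fin 2) ℚ)) * (MvPolynomial.X 0 * MvPolynomial.X 1))
      else if (j : ℕ) + 1 = (i : ℕ) then (((j:ℕ) : MvPolynomial (Fin 2) ℚ) + 1)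
      else 0 with hBdef
  have hAB : A = B.map φ := by
    ext i j
    rw [hA i j, Matrix.map_apply, hBdef]
    simp only
    split_ifs
    · rw [_root_.map_mul, map_natCast φ, _root_.map_add, hφx, hφy, hsum]; ring
    · rw [map_neg, _root_.map_mul, map_sub, map_natCast φ, map_natCast φ, _root_.map_mul,
        hφx, hφy, hprod]; ring
    · rw [_root_.map_add, map_natCast φ, _root_.map_one]
    · exact (map_zero φ).symm
  have hBdet := Stmt10Aux.univDet m B (fun i j => rfl)
  rw [hAB, show B.map φ = (φ : MvPolynomial (Fin 2) ℚ →+* R).mapMatrix B from rfl,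
    ← RingHom.map_det, hBdet, map_prod]
  refine Finset.prod_congr rfl fun k hk => ?_
  have hk' : k ≤ m := Nat.lt_succ_iff.mp (Finset.mem_range.mp hk)
  simp only [RingHom.coe_coe]
  rw [_root_.map_add, _root_.map_mul, _root_.map_mul, map_natCast φ, map_natCast φ, hφx, hφy]
  rw [Algebra.smul_def, Algebra.smul_def]
  have e1 : algebraMap ℚ R ((m:ℚ)/2) = (m : R) * q2 := by
    rw [show ((m:ℚ)/2) = (m:ℚ) * 2⁻¹ by ring, _root_.map_mul, map_natCast, hq2]
  have e2 : algebraMap ℚ R (((m:ℚ) - 2*(k:ℚ))/2) = ((m : R) - 2*(k:R)) * q2 := by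
    rw [show (((m:ℚ) - 2*(k:ℚ))/2) = ((m:ℚ) - 2*(k:ℚ)) * 2⁻¹ by ring, _root_.map_mul, map_sub,
      map_natCast, _root_.map_mul, map_natCast, hq2]
    norm_num
    rw [map_ofNat]
  rw [e1, e2, Nat.cast_sub hk']
  rw [hα, hβ]
  ring
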